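/- Fix integers d ≥ 2 and n ≥ 1. For every binary array a = (a_{y,i}) ∈ {0,1}^{{1,...,n}×{1,...,d−1}}, one has h_n(a) ≥ 1 + f_n(a)/d², where f_n(a) is the number of bit flips in the lexicographic reading of a. -/
import Mathlib

open scoped Classical

open Finset in
private lemma geom_aux (D : ℝ) (n : ℕ) :
    ∑ x ∈ Finset.Icc 1 n, (D - 1) * D ^ ((x : ℤ) - 1) = D ^ n - 1 := by
  induction n with
  | zero => simp
  | succ n ih =>
    rw [Finset.sum_Icc_succ_top (by omega), ih]
    push_cast
    rw [show ((n:ℤ) + 1 - 1) = (n:ℤ) by ring, zpow_natCast]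
    ring

private def nxtFn (m k : ℕ) : ℕ × ℕ :=
  if (k - 1) % m + 1 = m then ((k - 1) / m + 2, 1) else ((k - 1) / m + 1, (k - 1) % m + 2)

private noncomputable def phiFn (m : ℕ) (a : ℕ → ℕ → ℝ) (k : ℕ) : (ℕ × ℕ) × ℕ × ℕ :=
  if a ((k - 1) / m + 1) ((k - 1) % m + 1) = 0
  then (((k - 1) / m + 1, (k - 1) % m + 1), nxtFn m k)
  else (nxtFn m k, ((k - 1) / m + 1, (k - 1) % m + 1))

private def psiFn (m : ℕ) (p : (ℕ × ℕ) × ℕ × ℕ) : ℕ :=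
  min ((p.1.1 - 1) * m + p.1.2) ((p.2.1 - 1) * m + p.2.2)

/-- For integers `d ≥ 2`, `n ≥ 1` and a binary array
`a = (a_{y,i})` indexed by `{1,…,n} × {1,…,d-1}`, one has `h_n(a) ≥ 1 + f_n(a)/d²`,
where `f_n(a)` is the number of bit flips in the lexicographic reading
`b_{(y-1)(d-1)+i} = a_{y,i}` of `a`. -/
theorem h_ge_one_add_flips
    (d n : ℕ) (hd : 2 ≤ d) (hn : 1 ≤ n)
    (a : ℕ → ℕ → ℝ)
    (ha : ∀ y ∈ Finset.Icc 1 n, ∀ i ∈ Finset.Icc 1 (d - 1), a y i = 0 ∨ a y i = 1)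
    (b : ℕ → ℝ)
    (hb : ∀ y ∈ Finset.Icc 1 n, ∀ i ∈ Finset.Icc 1 (d - 1), b ((y - 1) * (d - 1) + i) = a y i) :
    (d : ℝ) ^ (-(n : ℤ))
      + ∑ y ∈ Finset.Icc 1 n, ∑ i ∈ Finset.Icc 1 (d - 1),
          a y i * (d : ℝ) ^ ((y : ℤ) - (n : ℤ))
      + ∑ x ∈ Finset.Icc 1 n, ∑ j ∈ Finset.Icc 1 (d - 1),
          (1 - a x j) * ((d : ℝ) ^ ((x : ℤ) - (n : ℤ) - 1)
            + ∑ y ∈ Finset.Icc 1 n, ∑ i ∈ Finset.Icc 1 (d - 1),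
                a y i * (d : ℝ) ^ (-|(y : ℤ) - (x : ℤ)| - 1))
    ≥ 1 + (((Finset.Icc 1 ((d - 1) * n - 1)).filter
              (fun k => b k ≠ b (k + 1))).card : ℝ) / (d : ℝ) ^ 2 := by
  classical
  set m := d - 1 with hmdef
  have hm1 : 1 ≤ m := by omega
  set D : ℝ := (d : ℝ) with hDdef
  have hD2 : (2:ℝ) ≤ D := by rw [hDdef]; exact_mod_cast hd
  have hD0 : (0:ℝ) < D := by linarith
  have hD1 : (1:ℝ) ≤ D := by linarith
  have hDne : D ≠ 0 := ne_of_gt hD0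
  have hmcast : (m : ℝ) = D - 1 := by
    rw [hDdef, hmdef]
    push_cast [Nat.cast_sub (by omega : 1 ≤ d)]
    ring
  clear_value m D
  -- split the third sum
  rw [show (∑ x ∈ Finset.Icc 1 n, ∑ j ∈ Finset.Icc 1 m,
          (1 - a x j) * (D ^ ((x : ℤ) - (n : ℤ) - 1)
            + ∑ y ∈ Finset.Icc 1 n, ∑ i ∈ Finset.Icc 1 m,
                a y i * D ^ (-|(y : ℤ) - (x : ℤ)| - 1)))
      = (∑ x ∈ Finset.Icc 1 n, ∑ j ∈ Finset.Icc 1 m,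
          (1 - a x j) * D ^ ((x : ℤ) - (n : ℤ) - 1))
        + (∑ x ∈ Finset.Icc 1 n, ∑ j ∈ Finset.Icc 1 m,
          (1 - a x j) * ∑ y ∈ Finset.Icc 1 n, ∑ i ∈ Finset.Icc 1 m,
                a y i * D ^ (-|(y : ℤ) - (x : ℤ)| - 1)) from by
    rw [← Finset.sum_add_distrib]
    refine Finset.sum_congr rfl fun x _ => ?_
    rw [← Finset.sum_add_distrib]
    exact Finset.sum_congr rfl fun j _ => mul_add _ _ _]
  -- Part 1 : base ≥ 1
  have h1 : D ^ (-(n:ℤ))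
      + ∑ y ∈ Finset.Icc 1 n, ∑ i ∈ Finset.Icc 1 m, a y i * D ^ ((y : ℤ) - (n : ℤ))
      + ∑ x ∈ Finset.Icc 1 n, ∑ j ∈ Finset.Icc 1 m,
          (1 - a x j) * D ^ ((x : ℤ) - (n : ℤ) - 1) ≥ 1 := by
    have hstep : ∀ x ∈ Finset.Icc 1 n,
        (m : ℝ) * D ^ ((x:ℤ) - (n:ℤ) - 1)
          ≤ (∑ i ∈ Finset.Icc 1 m, a x i * D ^ ((x : ℤ) - (n : ℤ)))
            + ∑ j ∈ Finset.Icc 1 m, (1 - a x j) * D ^ ((x : ℤ) - (n : ℤ) - 1) := by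
      intro x hx
      rw [← Finset.sum_add_distrib]
      have : (m:ℝ) * D ^ ((x:ℤ) - (n:ℤ) - 1)
          = ∑ _i ∈ Finset.Icc 1 m, D ^ ((x:ℤ) - (n:ℤ) - 1) := by
        rw [Finset.sum_const, Nat.card_Icc, nsmul_eq_mul]; norm_num
      rw [this]
      refine Finset.sum_le_sum fun i hi => ?_
      have hpow : D ^ ((x:ℤ) - (n:ℤ)) = D ^ ((x:ℤ) - (n:ℤ) - 1) * D := by
        rw [← zpow_add_one₀ hDne]; ring_nf
      have hp0 : (0:ℝ) < D ^ ((x:ℤ) - (n:ℤ) - 1) := zpow_pos hD0 _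
      rcases ha x hx i hi with h | h <;> rw [h] <;> nlinarith
    have hgeom : D ^ (-(n:ℤ)) + ∑ x ∈ Finset.Icc 1 n, (m : ℝ) * D ^ ((x:ℤ) - (n:ℤ) - 1)
        = 1 := by
      have hfac : ∀ x : ℕ, (m : ℝ) * D ^ ((x:ℤ) - (n:ℤ) - 1)
          = D ^ (-(n:ℤ)) * ((D - 1) * D ^ ((x:ℤ) - 1)) := by
        intro x
        rw [hmcast, show ((x:ℤ) - (n:ℤ) - 1) = -(n:ℤ) + ((x:ℤ) - 1) by ring,
          zpow_add₀ hDne]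
        ring
      simp only [hfac]
      rw [← Finset.mul_sum, geom_aux]
      have : D ^ (-(n:ℤ)) * D ^ (n:ℤ) = 1 := by
        rw [← zpow_add₀ hDne]; simp
      rw [mul_sub, mul_one]
      rw [show D ^ (n:ℕ) = D ^ ((n:ℕ):ℤ) from (zpow_natCast D n).symm, this]
      ring
    have := Finset.sum_le_sum hstep
    have hsplit2 : ∑ x ∈ Finset.Icc 1 n,
        ((∑ i ∈ Finset.Icc 1 m, a x i * D ^ ((x : ℤ) - (n : ℤ)))
          + ∑ j ∈ Finset.Icc 1 m, (1 - a x j) * D ^ ((x : ℤ) - (n : ℤ) - 1))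
        = (∑ y ∈ Finset.Icc 1 n, ∑ i ∈ Finset.Icc 1 m, a y i * D ^ ((y : ℤ) - (n : ℤ)))
          + ∑ x ∈ Finset.Icc 1 n, ∑ j ∈ Finset.Icc 1 m,
              (1 - a x j) * D ^ ((x : ℤ) - (n : ℤ) - 1) :=
      Finset.sum_add_distrib
    rw [hsplit2] at this
    linarith [hgeom]
  -- Part 2 : cross term ≥ flips / d²
  have h2 : (∑ x ∈ Finset.Icc 1 n, ∑ j ∈ Finset.Icc 1 m,
        (1 - a x j) * ∑ y ∈ Finset.Icc 1 n, ∑ i ∈ Finset.Icc 1 m,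
              a y i * D ^ (-|(y : ℤ) - (x : ℤ)| - 1))
      ≥ (((Finset.Icc 1 (m * n - 1)).filter (fun k => b k ≠ b (k + 1))).card : ℝ) / D ^ 2 := by
    set K := (Finset.Icc 1 (m * n - 1)).filter (fun k => b k ≠ b (k + 1)) with hK
    set P : Finset (ℕ × ℕ) := Finset.Icc 1 n ×ˢ Finset.Icc 1 m with hP
    set g : (ℕ × ℕ) × ℕ × ℕ → ℝ := fun p =>
      (1 - a p.1.1 p.1.2) * (a p.2.1 p.2.2 * D ^ (-|(p.2.1 : ℤ) - (p.1.1 : ℤ)| - 1)) with hg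
    have hT : (∑ x ∈ Finset.Icc 1 n, ∑ j ∈ Finset.Icc 1 m,
        (1 - a x j) * ∑ y ∈ Finset.Icc 1 n, ∑ i ∈ Finset.Icc 1 m,
              a y i * D ^ (-|(y : ℤ) - (x : ℤ)| - 1)) = ∑ p ∈ P ×ˢ P, g p := by
      rw [hP]
      simp only [Finset.sum_product, hg, Finset.mul_sum]
    have hgnn : ∀ p ∈ P ×ˢ P, 0 ≤ g p := by
      rintro ⟨⟨x, j⟩, y, i⟩ hp
      simp only [hP, Finset.mem_product] at hp
      obtain ⟨⟨hx, hj⟩, hy, hi⟩ := hp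
      have h1 := ha x hx j hj
      have h2 := ha y hy i hi
      have hz := (zpow_pos hD0 (-|(y : ℤ) - (x : ℤ)| - 1)).le
      rcases h1 with h1 | h1 <;> rcases h2 with h2 | h2 <;>
        simp only [hg, h1, h2] <;> nlinarith
    have key : ∀ k ∈ K, phiFn m a k ∈ P ×ˢ P ∧ D ^ (-2 : ℤ) ≤ g (phiFn m a k)
        ∧ psiFn m (phiFn m a k) = k := by
      intro k hk
      rw [hK, Finset.mem_filter, Finset.mem_Icc] at hk
      obtain ⟨⟨hk1, hk2⟩, hflip⟩ := hk
      have hdm : m * ((k - 1) / m) + (k - 1) % m = k - 1 := Nat.div_add_mod (k - 1) m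
      set q := (k - 1) / m with hq
      set r := (k - 1) % m with hr
      have hrm : r < m := Nat.mod_lt _ (by omega)
      clear_value q r
      have hmn1 : 0 < m * n := Nat.mul_pos (by omega) (by omega)
      have hkmn : k < m * n := lt_of_le_of_lt hk2 (Nat.sub_lt hmn1 one_pos)
      have e2 : m * n = n * m := mul_comm m n
      have hposk : q * m + (r + 1) = k := by
        have e1 : m * q = q * m := mul_comm m q
        omega
      have hqn : q < n := by
        by_contra hcon
        push_neg at hcon
        have h6 : n * m ≤ q * m := mul_le_mul_left hcon m
        omega
      -- facts about nxtFn
      obtain ⟨y₂, i₂, hy₂1, hy₂n, hi₂1, hi₂m, hpos₂, hyd, hnxteq⟩ :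
          ∃ y₂ i₂, 1 ≤ y₂ ∧ y₂ ≤ n ∧ 1 ≤ i₂ ∧ i₂ ≤ m ∧ (y₂ - 1) * m + i₂ = k + 1
            ∧ (y₂ = q + 1 ∨ y₂ = q + 2) ∧ nxtFn m k = (y₂, i₂) := by
        by_cases hc : r + 1 = m
        · refine ⟨q + 2, 1, by omega, ?_, le_refl 1, by omega, ?_, Or.inr rfl, ?_⟩
          · -- q + 2 ≤ n
            have h5 : (q + 1) * m < n * m := by
              rw [add_mul, one_mul]
              omega
            have := Nat.lt_of_mul_lt_mul_right h5
            omega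
          · -- position
            rw [show q + 2 - 1 = q + 1 from rfl, add_mul, one_mul]
            omega
          · rw [nxtFn, if_pos (by rw [← hr]; exact hc), ← hq]
        · refine ⟨q + 1, r + 2, by omega, by omega, by omega, by omega, ?_, Or.inl rfl, ?_⟩
          · rw [show q + 1 - 1 = q from rfl]
            omega
          · rw [nxtFn, if_neg (by rw [← hr]; exact hc), ← hq, ← hr]
      have hmem1 : q + 1 ∈ Finset.Icc 1 n := Finset.mem_Icc.2 ⟨by omega, by omega⟩
      have hmem2 : r + 1 ∈ Finset.Icc 1 m := Finset.mem_Icc.2 ⟨by omega, by omega⟩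
      have hmem3 : y₂ ∈ Finset.Icc 1 n := Finset.mem_Icc.2 ⟨hy₂1, hy₂n⟩
      have hmem4 : i₂ ∈ Finset.Icc 1 m := Finset.mem_Icc.2 ⟨hi₂1, hi₂m⟩
      have hbk : b k = a (q + 1) (r + 1) := by
        have := hb (q + 1) hmem1 (r + 1) hmem2
        rwa [Nat.add_sub_cancel, hposk] at this
      have hbk1 : b (k + 1) = a y₂ i₂ := by
        have := hb y₂ hmem3 i₂ hmem4
        rwa [hpos₂] at this
      rw [hbk, hbk1] at hflip
      have hA := ha (q + 1) hmem1 (r + 1) hmem2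
      have hB := ha y₂ hmem3 i₂ hmem4
      have habs : D ^ (-2 : ℤ) ≤ D ^ (-|(y₂ : ℤ) - ((q : ℤ) + 1)| - 1) := by
        refine zpow_le_zpow_right₀ hD1 ?_
        rcases hyd with rfl | rfl <;> push_cast <;>
          [rw [show ((q : ℤ) + 1) - ((q : ℤ) + 1) = 0 by ring];
           rw [show ((q : ℤ) + 2) - ((q : ℤ) + 1) = 1 by ring]] <;> norm_num
      have habs' : D ^ (-2 : ℤ) ≤ D ^ (-|((q : ℤ) + 1) - (y₂ : ℤ)| - 1) := by
        rw [abs_sub_comm]; exact habs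
      have hpsik : ∀ hφ : (ℕ × ℕ) × ℕ × ℕ,
          (hφ = (((q + 1), (r + 1)), (y₂, i₂)) ∨ hφ = ((y₂, i₂), ((q + 1), (r + 1)))) →
          psiFn m hφ = k := by
        rintro p (rfl | rfl) <;>
          simp only [psiFn, Nat.add_sub_cancel, hposk, hpos₂] <;> omega
      rcases hA with hA | hA
      · have hB1 : a y₂ i₂ = 1 := hB.resolve_left fun h => absurd (hA.trans h.symm) hflip
        have hφk : phiFn m a k = (((q + 1), (r + 1)), (y₂, i₂)) := by
          rw [phiFn, ← hq, ← hr, if_pos hA, hnxteq]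
        refine ⟨?_, ?_, hpsik _ (Or.inl hφk)⟩
        · rw [hφk, hP]
          simp only [Finset.mem_product]
          exact ⟨⟨hmem1, hmem2⟩, hmem3, hmem4⟩
        · rw [hφk]
          simp only [hg, hA, hB1]
          push_cast
          simpa using habs
      · have hB1 : a y₂ i₂ = 0 := hB.resolve_right fun h => absurd (hA.trans h.symm) hflip
        have hφk : phiFn m a k = ((y₂, i₂), ((q + 1), (r + 1))) := by
          rw [phiFn, ← hq, ← hr, if_neg (by rw [hA]; norm_num), hnxteq]
        refine ⟨?_, ?_, hpsik _ (Or.inr hφk)⟩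
        · rw [hφk, hP]
          simp only [Finset.mem_product]
          exact ⟨⟨hmem3, hmem4⟩, hmem1, hmem2⟩
        · rw [hφk]
          simp only [hg, hA, hB1]
          push_cast
          simpa using habs'
    rw [ge_iff_le, hT]
    have himg : Finset.image (phiFn m a) K ⊆ P ×ˢ P := by
      intro p hp
      rw [Finset.mem_image] at hp
      obtain ⟨k, hk, rfl⟩ := hp
      exact (key k hk).1
    have hinj : ∀ k1 ∈ K, ∀ k2 ∈ K, phiFn m a k1 = phiFn m a k2 → k1 = k2 := by
      intro k1 h1 k2 h2 he
      rw [← (key k1 h1).2.2, ← (key k2 h2).2.2, he]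
    calc (K.card : ℝ) / D ^ 2 = ∑ _k ∈ K, D ^ (-2 : ℤ) := by
          rw [Finset.sum_const, nsmul_eq_mul,
            show (-2 : ℤ) = -((2 : ℕ) : ℤ) by norm_num, zpow_neg, zpow_natCast,
            div_eq_mul_inv]
      _ ≤ ∑ k ∈ K, g (phiFn m a k) := Finset.sum_le_sum fun k hk => (key k hk).2.1
      _ = ∑ p ∈ Finset.image (phiFn m a) K, g p := (Finset.sum_image hinj).symm
      _ ≤ ∑ p ∈ P ×ˢ P, g p :=
          Finset.sum_le_sum_of_subset_of_nonneg himg fun p hp _ => hgnn p hp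
  linarith
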